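/- Let S₁ and S₂ be nonempty closed convex subsets of a real Hilbert space H with metric projections P₁ : H → S₁ and P₂ : H → S₂, and let d(S₁, S₂) := inf{‖u − v‖ : u ∈ S₁, v ∈ S₂}. For an arbitrary x₀ ∈ H define the alternating projection sequence by x_{2n+1} = P₁(x_{2n}) and x_{2n+2} = P₂(x_{2n+1}). Then lim_{n→∞} ‖x_{2n+2} − x_{2n+1}‖ = lim_{n→∞} ‖x_{2n+1} − x_{2n}‖ = d(S₁, S₂). -/

import Mathlib

open Filter

/-- `P` is the metric (nearest-point) projection onto the set `C`. -/
def IsProjOn {H : Type*} [NormedAddCommGroup H] (P : H → H) (C : Set H) : Prop :=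
  ∀ x : H, P x ∈ C ∧ ∀ y ∈ C, ‖x - P x‖ ≤ ‖x - y‖

/-- The distance between two sets: `inf {‖u − v‖ : u ∈ S₁, v ∈ S₂}`. -/
noncomputable def setDist {H : Type*} [NormedAddCommGroup H] (A B : Set H) : ℝ :=
  sInf {d : ℝ | ∃ u ∈ A, ∃ v ∈ B, d = ‖u - v‖}

open scoped RealInnerProductSpace

/-- Variational inequality for metric projections onto convex sets. -/
private lemma proj_inner_le {H : Type*} [NormedAddCommGroup H] [InnerProductSpace ℝ H]
    {C : Set H} (hC : Convex ℝ C) {P : H → H} (hP : IsProjOn P C) (x : H) {y : H}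
    (hy : y ∈ C) : ⟪x - P x, y - P x⟫ ≤ 0 := by
  have hPx := (hP x).1
  have hinf : ‖x - P x‖ = ⨅ w : C, ‖x - w‖ := by
    have hne : Nonempty C := ⟨⟨y, hy⟩⟩
    refine le_antisymm (le_ciInf fun w => (hP x).2 w w.2) ?_
    exact ciInf_le ⟨0, fun _ ⟨_, h⟩ => h ▸ norm_nonneg _⟩ (⟨P x, hPx⟩ : C)
  exact (norm_eq_iInf_iff_real_inner_le_zero hC hPx).1 hinf y hy

/-- Firm nonexpansiveness of metric projections. -/
private lemma proj_firm {H : Type*} [NormedAddCommGroup H] [InnerProductSpace ℝ H]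
    {C : Set H} (hC : Convex ℝ C) {P : H → H} (hP : IsProjOn P C) (x y : H) :
    ‖P x - P y‖ ^ 2 + ‖(x - P x) - (y - P y)‖ ^ 2 ≤ ‖x - y‖ ^ 2 := by
  have h1 := proj_inner_le hC hP x (hP y).1
  have h2 := proj_inner_le hC hP y (hP x).1
  have key : ‖P x - P y‖ ^ 2 ≤ ⟪x - y, P x - P y⟫ := by
    have e : ⟪x - y, P x - P y⟫ - ‖P x - P y‖ ^ 2
        = (- ⟪x - P x, P y - P x⟫) + (- ⟪y - P y, P x - P y⟫) := by
      rw [← real_inner_self_eq_norm_sq]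
      simp only [inner_sub_left, inner_sub_right]
      rw [real_inner_comm (P y) (P x)]
      ring
    linarith
  have heq : (x - P x) - (y - P y) = (x - y) - (P x - P y) := by abel
  have hex := norm_sub_sq_real (x - y) (P x - P y)
  rw [heq]
  linarith

/-- Kopecká–Reich: for alternating projections onto two nonempty closed convex subsets of
a real Hilbert space, the distances between consecutive iterates converge to the distance
between the two sets. -/
theorem stmt15 {H : Type*} [NormedAddCommGroup H] [InnerProductSpace ℝ H] [CompleteSpace H]
    (S₁ S₂ : Set H) (hne₁ : S₁.Nonempty) (hne₂ : S₂.Nonempty)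
    (hcl₁ : IsClosed S₁) (hcl₂ : IsClosed S₂)
    (hcv₁ : Convex ℝ S₁) (hcv₂ : Convex ℝ S₂)
    (P₁ P₂ : H → H) (hP₁ : IsProjOn P₁ S₁) (hP₂ : IsProjOn P₂ S₂)
    (x0 : H) (x : ℕ → H) (hx0 : x 0 = x0)
    (hodd : ∀ n : ℕ, x (2 * n + 1) = P₁ (x (2 * n)))
    (heven : ∀ n : ℕ, x (2 * n + 2) = P₂ (x (2 * n + 1))) :
    Tendsto (fun n : ℕ => ‖x (2 * n + 2) - x (2 * n + 1)‖) atTop (nhds (setDist S₁ S₂)) ∧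
    Tendsto (fun n : ℕ => ‖x (2 * n + 1) - x (2 * n)‖) atTop (nhds (setDist S₁ S₂)) := by
  classical
  set D := setDist S₁ S₂ with hDdef
  set Q : ℕ → H → H := fun n => if Even n then P₁ else P₂ with hQ
  -- the iteration is a step map
  have hxstep : ∀ n, x (n + 1) = Q n (x n) := by
    intro n
    rcases Nat.even_or_odd n with he | ho
    · obtain ⟨k, hk⟩ := he
      have hn : n = 2 * k := by omega
      subst hn
      have hEv : Even (2 * k) := ⟨k, by ring⟩
      simp only [hQ, if_pos hEv]
      exact hodd k
    · obtain ⟨k, hk⟩ := ho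
      subst hk
      have hEv : ¬ Even (2 * k + 1) := by simp [Nat.even_add_one]
      simp only [hQ, if_neg hEv]
      exact heven k
  -- membership of iterates
  have hmem : ∀ (z : ℕ → H), (∀ n, z (n + 1) = Q n (z n)) →
      ∀ m, z (m + 1) ∈ (if Even (m + 1) then S₂ else S₁) := by
    intro z hz m
    by_cases h : Even (m + 1)
    · have hm : ¬ Even m := by rwa [Nat.even_add_one] at h
      rw [if_pos h, hz m, hQ]
      simp only [if_neg hm]
      exact (hP₂ (z m)).1
    · have hm : Even m := by
        rw [Nat.even_add_one] at h; exact not_not.1 h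
      rw [if_neg h, hz m, hQ]
      simp only [if_pos hm]
      exact (hP₁ (z m)).1
  -- one-step monotonicity of consecutive distances
  have hstepmono : ∀ (z : ℕ → H), (∀ n, z (n + 1) = Q n (z n)) →
      ∀ n, z n ∈ (if Even n then S₂ else S₁) →
      ‖z (n + 2) - z (n + 1)‖ ≤ ‖z (n + 1) - z n‖ := by
    intro z hz n hn
    by_cases h : Even n
    · have h1 : ¬ Even (n + 1) := by simp [Nat.even_add_one, h]
      have hz2 : z (n + 2) = P₂ (z (n + 1)) := by
        rw [hz (n + 1), hQ]; simp only [if_neg h1]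
      rw [hz2, norm_sub_rev]
      exact (hP₂ (z (n + 1))).2 (z n) (by rw [if_pos h] at hn; exact hn)
    · have h1 : Even (n + 1) := Nat.even_add_one.2 h
      have hz2 : z (n + 2) = P₁ (z (n + 1)) := by
        rw [hz (n + 1), hQ]; simp only [if_pos h1]
      rw [hz2, norm_sub_rev]
      exact (hP₁ (z (n + 1))).2 (z n) (by rw [if_neg h] at hn; exact hn)
  set d' : ℕ → ℝ := fun n => ‖x (n + 2) - x (n + 1)‖ with hd'
  have hanti : Antitone d' := by
    apply antitone_nat_of_succ_le
    intro n
    exact hstepmono x hxstep (n + 1) (hmem x hxstep n)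
  have hbdd0 : BddBelow {d : ℝ | ∃ u ∈ S₁, ∃ v ∈ S₂, d = ‖u - v‖} := by
    refine ⟨0, ?_⟩
    rintro d ⟨u, _, v, _, rfl⟩
    exact norm_nonneg _
  have hDle : ∀ n, D ≤ d' n := by
    intro n
    have h1 := hmem x hxstep n
    have h2 := hmem x hxstep (n + 1)
    by_cases h : Even (n + 1)
    · rw [if_pos h] at h1
      have h' : ¬ Even (n + 2) := by simp [Nat.even_add_one, h]
      rw [if_neg h'] at h2
      exact csInf_le hbdd0 ⟨x (n + 2), h2, x (n + 1), h1, rfl⟩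
    · rw [if_neg h] at h1
      have h' : Even (n + 2) := Nat.even_add_one.2 h
      rw [if_pos h'] at h2
      refine csInf_le hbdd0 ⟨x (n + 1), h1, x (n + 2), h2, ?_⟩
      exact (norm_sub_rev _ _)
  have hLbdd : BddBelow (Set.range d') := ⟨D, by rintro _ ⟨n, rfl⟩; exact hDle n⟩
  set L := ⨅ n, d' n with hLdef
  have hLten : Tendsto d' atTop (nhds L) := tendsto_atTop_ciInf hanti hLbdd
  have hDL : D ≤ L := le_ciInf hDle
  -- the hard direction : L ≤ ‖u - v‖ for all u ∈ S₁, v ∈ S₂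
  have hmain : ∀ u ∈ S₁, ∀ v ∈ S₂, L ≤ ‖u - v‖ := by
    intro u hu v hv
    set y : ℕ → H := fun n => Nat.rec v (fun m ym => Q m ym) n with hy
    have hystep : ∀ n, y (n + 1) = Q n (y n) := fun n => rfl
    have hymem : ∀ n, y n ∈ (if Even n then S₂ else S₁) := by
      intro n
      cases n with
      | zero => simpa [show y 0 = v from rfl] using hv
      | succ m => exact hmem y hystep m
    -- increments of y are bounded by ‖u - v‖
    set e : ℕ → ℝ := fun n => ‖y (n + 1) - y n‖ with he
    have heanti : Antitone e :=
      antitone_nat_of_succ_le fun n => hstepmono y hystep n (hymem n)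
    have he0 : e 0 ≤ ‖u - v‖ := by
      have hy1 : y 1 = P₁ v := by
        simpa [hQ, show y 0 = v from rfl] using hystep 0
      have h1 : e 0 = ‖P₁ v - v‖ := by
        show ‖y 1 - y 0‖ = _
        rw [hy1]
        rfl
      rw [h1, norm_sub_rev]
      exact le_trans ((hP₁ v).2 u hu) (le_of_eq (norm_sub_rev v u))
    have heB : ∀ n, e n ≤ ‖u - v‖ := fun n => (heanti (Nat.zero_le n)).trans he0
    -- firm nonexpansiveness along the iteration
    set c : ℕ → ℝ := fun n => ‖x n - y n‖ ^ 2 with hc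
    set r : ℕ → ℝ := fun n => ‖(x n - x (n + 1)) - (y n - y (n + 1))‖ with hr
    have hfirm : ∀ n, c (n + 1) + r n ^ 2 ≤ c n := by
      intro n
      have hrw : r n = ‖(x n - Q n (x n)) - (y n - Q n (y n))‖ := by
        show ‖(x n - x (n + 1)) - (y n - y (n + 1))‖ = _
        rw [hxstep n, hystep n]
      have hcw : c (n + 1) = ‖Q n (x n) - Q n (y n)‖ ^ 2 := by
        show ‖x (n + 1) - y (n + 1)‖ ^ 2 = _
        rw [hxstep n, hystep n]
      rw [hrw, hcw]
      by_cases h : Even n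
      · have : Q n = P₁ := by rw [hQ]; simp only [if_pos h]
        rw [this]
        exact proj_firm hcv₁ hP₁ (x n) (y n)
      · have : Q n = P₂ := by rw [hQ]; simp only [if_neg h]
        rw [this]
        exact proj_firm hcv₂ hP₂ (x n) (y n)
    have hcanti : Antitone c := by
      apply antitone_nat_of_succ_le
      intro n
      have := hfirm n
      nlinarith [sq_nonneg (r n)]
    have hcbdd : BddBelow (Set.range c) :=
      ⟨0, by rintro _ ⟨n, rfl⟩; exact sq_nonneg _⟩
    have hcten : Tendsto c atTop (nhds (⨅ n, c n)) := tendsto_atTop_ciInf hcanti hcbdd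
    have hcten' : Tendsto (fun n => c (n + 1)) atTop (nhds (⨅ n, c n)) :=
      (tendsto_add_atTop_iff_nat 1).2 hcten
    have hsub : Tendsto (fun n => c n - c (n + 1)) atTop (nhds 0) := by
      simpa using hcten.sub hcten'
    have hr2 : Tendsto (fun n => r n ^ 2) atTop (nhds 0) := by
      refine squeeze_zero (fun n => sq_nonneg _) (fun n => ?_) hsub
      have := hfirm n
      linarith
    have hrten : Tendsto r atTop (nhds 0) := by
      have h1 : Tendsto (fun n => Real.sqrt (r n ^ 2)) atTop (nhds (Real.sqrt 0)) :=
        hr2.sqrt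
      have h2 : (fun n => Real.sqrt (r n ^ 2)) = r := by
        funext n
        exact Real.sqrt_sq (norm_nonneg _)
      rwa [h2, Real.sqrt_zero] at h1
    -- the key bound
    have hkey : ∀ n, d' n ≤ ‖u - v‖ + r (n + 1) := by
      intro n
      have heq : x (n + 2) - x (n + 1)
          = (y (n + 2) - y (n + 1)) +
            -((x (n + 1) - x (n + 2)) - (y (n + 1) - y (n + 2))) := by abel
      have : d' n ≤ ‖y (n + 2) - y (n + 1)‖ + r (n + 1) := by
        rw [hd']
        calc ‖x (n + 2) - x (n + 1)‖
            = ‖(y (n + 2) - y (n + 1)) +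
              -((x (n + 1) - x (n + 2)) - (y (n + 1) - y (n + 2)))‖ := by rw [← heq]
          _ ≤ ‖y (n + 2) - y (n + 1)‖ +
              ‖-((x (n + 1) - x (n + 2)) - (y (n + 1) - y (n + 2)))‖ := norm_add_le _ _
          _ = ‖y (n + 2) - y (n + 1)‖ + r (n + 1) := by rw [norm_neg]
      have := heB (n + 1)
      have he' : ‖y (n + 2) - y (n + 1)‖ = e (n + 1) := rfl
      linarith [this, he' ▸ (heB (n + 1))]
    have hrhs : Tendsto (fun n => ‖u - v‖ + r (n + 1)) atTop (nhds ‖u - v‖) := by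
      have : Tendsto (fun n => r (n + 1)) atTop (nhds 0) :=
        (tendsto_add_atTop_iff_nat 1).2 hrten
      simpa using (tendsto_const_nhds (x := ‖u - v‖) (f := atTop)).add this
    exact le_of_tendsto_of_tendsto' hLten hrhs hkey
  have hLD : L ≤ D := by
    rw [hDdef, setDist]
    apply le_csInf
    · obtain ⟨u, hu⟩ := hne₁
      obtain ⟨v, hv⟩ := hne₂
      exact ⟨‖u - v‖, u, hu, v, hv, rfl⟩
    · rintro d ⟨u, hu, v, hv, rfl⟩
      exact hmain u hu v hv
  have hLeqD : L = D := le_antisymm hLD hDL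
  have hLten' : Tendsto d' atTop (nhds D) := hLeqD ▸ hLten
  have hd : Tendsto (fun n => ‖x (n + 1) - x n‖) atTop (nhds D) := by
    apply (tendsto_add_atTop_iff_nat 1).1
    exact hLten'
  constructor
  · have h2n1 : Tendsto (fun n : ℕ => 2 * n + 1) atTop atTop :=
      tendsto_atTop_atTop.mpr fun b => ⟨b, fun a ha => by omega⟩
    exact hd.comp h2n1
  · have h2n : Tendsto (fun n : ℕ => 2 * n) atTop atTop :=
      tendsto_atTop_atTop.mpr fun b => ⟨b, fun a ha => by omega⟩
    exact hd.comp h2n
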